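/- For every finite abelian group G and every q ∈ G^n, det(B_{n,q}ᵀ B_{n,q}) = 3^n · det(M_q) · ∏_{a∈G_+} m_a^{n_a − 1}. Consequently, for the determinantal random matrix A_n one has ℙ(A_n q = 0) = (1/3) n^{−2n} det(M_q) ∏_{a∈G_+} m_a^{n_a−1}. -/

import Mathlib

open scoped Classical

noncomputable section

namespace CLPaper

open Matrix

/-- The matrix `B_n`: rows indexed by `[n]³`, columns by `[n]`;
the row of `(x₁,x₂,x₃)` is `e_{x₁} + e_{x₂} + e_{x₃}`. -/
def B (n : ℕ) : Matrix (Fin n × Fin n × Fin n) (Fin n) ℤ :=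
  fun x j => (if x.1 = j then 1 else 0) + (if x.2.1 = j then 1 else 0) +
    (if x.2.2 = j then 1 else 0)

/-- `det (B_n[K])` for an `n`-element subset `K` of `[n]³` (rows enumerated by a fixed
bijection; the quantities we consider do not depend on this choice), `0` otherwise. -/
def subdet (n : ℕ) (K : Finset (Fin n × Fin n × Fin n)) : ℤ :=
  if h : K.card = n then
    ((B n).submatrix
      (fun i : Fin n => ((K.equivFin.symm (Fin.cast h.symm i)) : Fin n × Fin n × Fin n))
      id).det
  else 0

/-- The cokernel `ℤ^n / (row span of the rows of `B_n` indexed by `K`)`. -/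
def cokK (n : ℕ) (K : Finset (Fin n × Fin n × Fin n)) : Type :=
  (Fin n → ℤ) ⧸ Submodule.span ℤ ((fun x => B n x) '' (K : Set (Fin n × Fin n × Fin n)))

instance (n : ℕ) (K : Finset (Fin n × Fin n × Fin n)) : AddCommGroup (cokK n K) :=
  inferInstanceAs (AddCommGroup ((Fin n → ℤ) ⧸ Submodule.span ℤ _))

/-- The `p`-Sylow subgroup of an abelian group: the subgroup of elements annihilated
by a power of `p`. -/
def sylow (p : ℕ) (A : Type*) [AddCommGroup A] : AddSubgroup A where
  carrier := {x | ∃ k : ℕ, p ^ k • x = 0}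
  zero_mem' := ⟨0, by simp⟩
  add_mem' := by
    rintro x y ⟨k, hk⟩ ⟨l, hl⟩
    refine ⟨k + l, ?_⟩
    rw [smul_add, pow_add, mul_comm, mul_smul, hk, smul_zero, mul_comm, mul_smul, hl,
      smul_zero, add_zero]
  neg_mem' := by
    rintro x ⟨k, hk⟩
    exact ⟨k, by rw [smul_neg, hk, neg_zero]⟩

/-- Number of surjective homomorphisms from `A` to `G`. -/
def numSur (A G : Type*) [AddCommGroup A] [AddCommGroup G] : ℕ :=
  Nat.card {f : A →+ G // Function.Surjective f}

variable {G : Type*} [AddCommGroup G] [Fintype G]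

/-- The submatrix `B_{n,q}` of `B_n` consisting of the rows indexed by
`I_q = {(x₁,x₂,x₃) : q_{x₁} + q_{x₂} + q_{x₃} = 0}`. -/
def Bq (n : ℕ) (q : Fin n → G) :
    Matrix {x : Fin n × Fin n × Fin n // q x.1 + q x.2.1 + q x.2.2 = 0} (Fin n) ℤ :=
  fun x j => B n x.1 j

/-- The Gram matrix `B_{n,q}ᵀ B_{n,q}`. -/
def gram (n : ℕ) (q : Fin n → G) : Matrix (Fin n) (Fin n) ℤ :=
  (Bq n q)ᵀ * Bq n q

/-- `n_a(q) = #{i : q_i = a}`. -/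
def cnt {n : ℕ} (q : Fin n → G) (a : G) : ℕ :=
  (Finset.univ.filter (fun i => q i = a)).card

/-- `m_a = ∑_b n_b n_{-a-b}` associated to a counts vector `n̄ : G → ℕ`. -/
def mOf (nbar : G → ℕ) (a : G) : ℕ :=
  ∑ b : G, nbar b * nbar (-a - b)

/-- The matrix `M` indexed by `G₊ = {a : n_a > 0}`, with
`M(a,a) = 2 n_a n_{-2a} + m_a` and `M(a,b) = 2 √(n_a n_b) n_{-a-b}` for `a ≠ b`. -/
def Mmat (nbar : G → ℕ) :
    Matrix {a : G // 0 < nbar a} {a : G // 0 < nbar a} ℝ :=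
  fun a b =>
    if (a : G) = (b : G) then
      2 * (nbar (a : G) : ℝ) * (nbar (-(2 • (a : G))) : ℝ) + (mOf nbar (a : G) : ℝ)
    else
      2 * Real.sqrt ((nbar (a : G) : ℝ) * (nbar (b : G) : ℝ)) * (nbar (-(a : G) - b) : ℝ)

/-- The set `S(n̄)` of vectors `q ∈ G^n` with the prescribed counts. -/
def Sset (n : ℕ) (nbar : G → ℕ) : Finset (Fin n → G) :=
  Finset.univ.filter (fun q => ∀ a : G, cnt q a = nbar a)

/-- `E(n̄) = ∑_{q ∈ S(n̄)} det(B_{n,q}ᵀ B_{n,q}) / (3^{n+1} n^{2n})`. -/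
def Eval (n : ℕ) (nbar : G → ℕ) : ℝ :=
  (∑ q ∈ Sset n nbar, ((gram n q).det : ℝ)) / ((3 : ℝ) ^ (n + 1) * (n : ℝ) ^ (2 * n))

/-- Kullback–Leibler divergence of two probability vectors on `G` (natural log;
terms with `ν a = 0` contribute `0`). -/
def klDiv (ν μ : G → ℝ) : ℝ :=
  ∑ a : G, if ν a = 0 then 0 else ν a * Real.log (ν a / μ a)

/-- `ν_{n̄}(a) = n_a / n`. -/
def nuOf (n : ℕ) (nbar : G → ℕ) : G → ℝ := fun a => (nbar a : ℝ) / n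

/-- `μ_{n̄}(a) = m_a / n²`. -/
def muOf (n : ℕ) (nbar : G → ℕ) : G → ℝ := fun a => (mOf nbar a : ℝ) / (n : ℝ) ^ 2

/-- `t_n = 2C √(|G| n log n)`. -/
def tSeq (G : Type*) [Fintype G] (C : ℝ) (n : ℕ) : ℝ :=
  2 * C * Real.sqrt ((Fintype.card G) * n * Real.log n)

/-- `r_n = 4C |G| log n`. -/
def rSeq (G : Type*) [Fintype G] (C : ℝ) (n : ℕ) : ℝ :=
  4 * C * (Fintype.card G) * Real.log n

/-- `n̄ ∈ D_n`: the counts sum to `n` and the support generates `G`. -/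
def memD (n : ℕ) (nbar : G → ℕ) : Prop :=
  (∑ a : G, nbar a = n) ∧ AddSubgroup.closure {a : G | 0 < nbar a} = ⊤

/-- `n̄ ∈ D_n'`: moreover `m_a > 0` for all `a ∈ G₊`. -/
def memD' (n : ℕ) (nbar : G → ℕ) : Prop :=
  memD n nbar ∧ ∀ a : G, 0 < nbar a → 0 < mOf nbar a

/-- `u_H(g) = 1/|H|` for `g ∈ H` and `0` otherwise. -/
def uH (H : AddSubgroup G) : G → ℝ :=
  fun g => if g ∈ H then (Nat.card H : ℝ)⁻¹ else 0

/-- `n̄ ∈ B(n,H)`. -/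
def memB (C : ℝ) (n : ℕ) (H : AddSubgroup G) (nbar : G → ℕ) : Prop :=
  memD' n nbar ∧ (∀ a : G, |(nbar a : ℝ) - n * uH H a| ≤ tSeq G C n) ∧
    (∑ a ∈ Finset.univ.filter (fun a : G => a ∉ H), (nbar a : ℝ)) ≤ rSeq G C n


variable {n : ℕ} (q : Fin n → G)

section iffs
variable (u v w a y z : G)
lemma is1 : u + v + w = 0 ↔ w = -u - v := by
  constructor
  · intro h; have h2 : w = u + v + w - (u + v) := by abel
    rw [h2, h]; abel
  · intro h; rw [h]; abel
lemma is2 : u + w + v = 0 ↔ w = -u - v := by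
  constructor
  · intro h; have h2 : w = u + w + v - (u + v) := by abel
    rw [h2, h]; abel
  · intro h; rw [h]; abel
lemma is3 : w + u + v = 0 ↔ w = -u - v := by
  constructor
  · intro h; have h2 : w = w + u + v - (u + v) := by abel
    rw [h2, h]; abel
  · intro h; rw [h]; abel
lemma ip2 : y + a + z = 0 ↔ z = -a - y := by
  constructor
  · intro h; have h2 : z = y + a + z - (a + y) := by abel
    rw [h2, h]; abel
  · intro h; rw [h]; abel
lemma ip3 : y + z + a = 0 ↔ z = -a - y := by
  constructor
  · intro h; have h2 : z = y + z + a - (a + y) := by abel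
    rw [h2, h]; abel
  · intro h; rw [h]; abel
end iffs

lemma cnt_sum (c : G) : ∑ z : Fin n, (if q z = c then (1:ℤ) else 0) = (cnt q c : ℤ) := by
  rw [cnt, Finset.card_filter]; push_cast; rfl

lemma pairP (a : G) :
    ∑ y : Fin n, ∑ z : Fin n, (if q z = -a - q y then (1:ℤ) else 0)
      = (mOf (cnt q) a : ℤ) := by
  have h1 : ∀ y : Fin n, ∑ z : Fin n, (if q z = -a - q y then (1:ℤ) else 0)
      = (cnt q (-a - q y) : ℤ) := fun y => cnt_sum q _
  rw [Finset.sum_congr rfl fun y _ => h1 y]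
  rw [← Finset.sum_fiberwise' Finset.univ q (fun b => (cnt q (-a - b) : ℤ))]
  unfold mOf
  push_cast
  exact Finset.sum_congr rfl fun b _ => by
    rw [Finset.sum_const, ← cnt]; push_cast; ring

lemma sum_c1 (u v : G) : ∑ z : Fin n, (if u + v + q z = 0 then (1:ℤ) else 0)
    = (cnt q (-u - v) : ℤ) := by
  rw [Finset.sum_congr rfl fun z _ => if_congr (is1 u v (q z)) rfl rfl]; exact cnt_sum q _
lemma sum_c2 (u v : G) : ∑ z : Fin n, (if u + q z + v = 0 then (1:ℤ) else 0)
    = (cnt q (-u - v) : ℤ) := by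
  rw [Finset.sum_congr rfl fun z _ => if_congr (is2 u v (q z)) rfl rfl]; exact cnt_sum q _
lemma sum_c3 (u v : G) : ∑ z : Fin n, (if q z + u + v = 0 then (1:ℤ) else 0)
    = (cnt q (-u - v) : ℤ) := by
  rw [Finset.sum_congr rfl fun z _ => if_congr (is3 u v (q z)) rfl rfl]; exact cnt_sum q _

lemma psum1 (a : G) : ∑ y : Fin n, ∑ z : Fin n, (if a + q y + q z = 0 then (1:ℤ) else 0)
    = (mOf (cnt q) a : ℤ) := by
  rw [Finset.sum_congr rfl fun y _ => Finset.sum_congr rfl fun z _ =>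
    if_congr (is1 a (q y) (q z)) rfl rfl]
  exact pairP q a
lemma psum2 (a : G) : ∑ y : Fin n, ∑ z : Fin n, (if q y + a + q z = 0 then (1:ℤ) else 0)
    = (mOf (cnt q) a : ℤ) := by
  rw [Finset.sum_congr rfl fun y _ => Finset.sum_congr rfl fun z _ =>
    if_congr (ip2 a (q y) (q z)) rfl rfl]
  exact pairP q a
lemma psum3 (a : G) : ∑ y : Fin n, ∑ z : Fin n, (if q y + q z + a = 0 then (1:ℤ) else 0)
    = (mOf (cnt q) a : ℤ) := by
  rw [Finset.sum_congr rfl fun y _ => Finset.sum_congr rfl fun z _ =>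
    if_congr (ip3 a (q y) (q z)) rfl rfl]
  exact pairP q a

lemma gram_apply (i j : Fin n) :
    gram n q i j = (if i = j then 3 * (mOf (cnt q) (q i) : ℤ) else 0)
      + 6 * (cnt q (-(q i) - q j) : ℤ) := by
  rw [gram, Matrix.mul_apply]
  simp only [Matrix.transpose_apply, Bq, B]
  rw [← Finset.sum_subtype (Finset.univ.filter
      (fun x : Fin n × Fin n × Fin n => q x.1 + q x.2.1 + q x.2.2 = 0))
      (fun x => by simp) (fun x => ((if x.1 = i then (1:ℤ) else 0) + (if x.2.1 = i then 1 else 0) +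
        (if x.2.2 = i then 1 else 0)) * ((if x.1 = j then (1:ℤ) else 0) + (if x.2.1 = j then 1 else 0) +
        (if x.2.2 = j then 1 else 0)))]
  rw [Finset.sum_filter]
  rw [Fintype.sum_prod_type]
  simp only [Fintype.sum_prod_type]
  have key : ∀ x1 x2 x3 : Fin n,
      (if q x1 + q x2 + q x3 = 0 then
        ((if x1 = i then (1:ℤ) else 0) + (if x2 = i then 1 else 0) + (if x3 = i then 1 else 0)) *
        ((if x1 = j then (1:ℤ) else 0) + (if x2 = j then 1 else 0) + (if x3 = j then 1 else 0))
       else 0)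
      = (if x1 = i then (1:ℤ) else 0) * ((if x1 = j then (1:ℤ) else 0) * (if q x1 + q x2 + q x3 = 0 then (1:ℤ) else 0))
      + (if x1 = i then (1:ℤ) else 0) * ((if x2 = j then (1:ℤ) else 0) * (if q x1 + q x2 + q x3 = 0 then (1:ℤ) else 0))
      + (if x1 = i then (1:ℤ) else 0) * ((if x3 = j then (1:ℤ) else 0) * (if q x1 + q x2 + q x3 = 0 then (1:ℤ) else 0))
      + (if x2 = i then (1:ℤ) else 0) * ((if x1 = j then (1:ℤ) else 0) * (if q x1 + q x2 + q x3 = 0 then (1:ℤ) else 0))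
      + (if x2 = i then (1:ℤ) else 0) * ((if x2 = j then (1:ℤ) else 0) * (if q x1 + q x2 + q x3 = 0 then (1:ℤ) else 0))
      + (if x2 = i then (1:ℤ) else 0) * ((if x3 = j then (1:ℤ) else 0) * (if q x1 + q x2 + q x3 = 0 then (1:ℤ) else 0))
      + (if x3 = i then (1:ℤ) else 0) * ((if x1 = j then (1:ℤ) else 0) * (if q x1 + q x2 + q x3 = 0 then (1:ℤ) else 0))
      + (if x3 = i then (1:ℤ) else 0) * ((if x2 = j then (1:ℤ) else 0) * (if q x1 + q x2 + q x3 = 0 then (1:ℤ) else 0))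
      + (if x3 = i then (1:ℤ) else 0) * ((if x3 = j then (1:ℤ) else 0) * (if q x1 + q x2 + q x3 = 0 then (1:ℤ) else 0)) := by
    intro x1 x2 x3
    split <;> ring
  simp only [key, Finset.sum_add_distrib]
  simp only [ite_mul, one_mul, zero_mul, Finset.sum_ite_irrel,
    Finset.sum_const_zero, Finset.sum_ite_eq', Finset.mem_univ, if_true]
  rw [psum1 q (q i), psum2 q (q i), psum3 q (q i),
    sum_c1 q (q i) (q j), sum_c2 q (q i) (q j), sum_c3 q (q i) (q j),
    sum_c1 q (q j) (q i), sum_c2 q (q j) (q i), sum_c3 q (q j) (q i)]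
  have hneg : (-(q j) - q i) = (-(q i) - q j) := by abel
  rw [hneg]
  by_cases hij : i = j <;> simp only [hij, if_true, if_false, smul_eq_mul] <;> push_cast <;> ring


section Aux
variable {n : ℕ} (q : Fin n → G)

lemma cnt_pos (i : Fin n) : 0 < cnt q (q i) :=
  Finset.card_pos.mpr ⟨i, by simp [Finset.mem_filter]⟩

/-- The indicator matrix `E`. -/
def Emat (q : Fin n → G) : Matrix {a : G // 0 < cnt q a} (Fin n) ℝ :=
  fun a i => if q i = (a : G) then 1 else 0

def Cmat (q : Fin n → G) : Matrix {a : G // 0 < cnt q a} (Fin n) ℝ :=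
  fun a i => 2 * (cnt q (-(a : G) - q i) : ℝ)

def Dmat (q : Fin n → G) (t : ℝ) : Matrix (Fin n) (Fin n) ℝ :=
  Matrix.diagonal fun i => (mOf (cnt q) (q i) : ℝ) + t

def Rmat (q : Fin n → G) (t : ℝ) :
    Matrix {a : G // 0 < cnt q a} {a : G // 0 < cnt q a} ℝ :=
  fun a b => 2 * (cnt q (-(a : G) - (b : G)) : ℝ) * (cnt q (b : G) : ℝ) +
    (if a = b then (mOf (cnt q) (b : G) : ℝ) + t else 0)

lemma mapA : (gram n q).map (fun z : ℤ => (z : ℝ))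
    = (3 : ℝ) • (Dmat q 0 + (Emat q)ᵀ * Cmat q) := by
  ext i j
  rw [Matrix.map_apply, gram_apply]
  have hmul : ((Emat q)ᵀ * Cmat q) i j = 2 * (cnt q (-(q i) - q j) : ℝ) := by
    rw [Matrix.mul_apply]
    simp only [Matrix.transpose_apply, Emat, ite_mul, one_mul, zero_mul]
    rw [Finset.sum_eq_single_of_mem (⟨q i, cnt_pos q i⟩ : {a : G // 0 < cnt q a})
      (Finset.mem_univ _) (fun b _ hb => if_neg fun hc => hb (Subtype.ext hc.symm))]
    simp [Cmat]
  simp only [Matrix.smul_apply, Matrix.add_apply, hmul, Dmat, Matrix.diagonal_apply]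
  push_cast
  by_cases hij : i = j <;> simp only [hij, if_true, if_false, smul_eq_mul] <;> push_cast <;> ring

lemma cnt_nonneg_real (a : G) : (0:ℝ) ≤ (cnt q a : ℝ) := Nat.cast_nonneg _

lemma prod_fiber (h : G → ℝ) (h1 : ∀ a : G, cnt q a = 0 → h a ^ (cnt q a) = 1) :
    ∏ i : Fin n, h (q i) = ∏ a : {a : G // 0 < cnt q a}, h (a : G) ^ (cnt q (a : G)) := by
  rw [← Finset.prod_fiberwise' Finset.univ q h]
  have step1 : ∀ a : G, (∏ i ∈ Finset.univ.filter (fun i => q i = a), h a) = h a ^ (cnt q a) := by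
    intro a; rw [Finset.prod_const, cnt]
  rw [Finset.prod_congr rfl fun a _ => step1 a]
  rw [← Finset.prod_subtype (Finset.univ.filter (fun a : G => 0 < cnt q a)) (by simp)
    (fun a => h a ^ (cnt q a))]
  refine (Finset.prod_subset (Finset.filter_subset _ _) ?_).symm
  intro a _ ha
  have : cnt q a = 0 := by
    by_contra hc
    exact ha (Finset.mem_filter.mpr ⟨Finset.mem_univ _, Nat.pos_of_ne_zero hc⟩)
  exact h1 a this

lemma waDet {t : ℝ} (ht : 0 < t) :
    (Dmat q t + (Emat q)ᵀ * Cmat q).det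
      = (Rmat q t).det *
        ∏ a : {a : G // 0 < cnt q a}, ((mOf (cnt q) (a : G) : ℝ) + t) ^ (cnt q (a : G) - 1) := by
  classical
  set d : Fin n → ℝ := fun i => (mOf (cnt q) (q i) : ℝ) + t with hd_def
  have hd : ∀ i, d i ≠ 0 := fun i => by positivity
  have hdi : ∀ a : G, (mOf (cnt q) a : ℝ) + t ≠ 0 := fun a => by positivity
  have h1 : Matrix.diagonal d * Matrix.diagonal (fun i => (d i)⁻¹) = 1 := by
    rw [Matrix.diagonal_mul_diagonal,
      show (fun i => d i * (d i)⁻¹) = fun _ => (1:ℝ) from funext fun i => mul_inv_cancel₀ (hd i)]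
    exact Matrix.diagonal_one
  have hsplit : Dmat q t + (Emat q)ᵀ * Cmat q
      = Matrix.diagonal d *
        (1 + (Matrix.diagonal (fun i => (d i)⁻¹) * (Emat q)ᵀ) * Cmat q) := by
    rw [Matrix.mul_add, Matrix.mul_one, ← Matrix.mul_assoc, ← Matrix.mul_assoc, h1,
      Matrix.one_mul]
    rfl
  have hW : (1 : Matrix {a : G // 0 < cnt q a} {a : G // 0 < cnt q a} ℝ)
        + Cmat q * (Matrix.diagonal (fun i => (d i)⁻¹) * (Emat q)ᵀ)
      = Rmat q t * Matrix.diagonal (fun b : {a : G // 0 < cnt q a} =>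
          ((mOf (cnt q) (b : G) : ℝ) + t)⁻¹) := by
    ext a b
    have hentry : (Cmat q * (Matrix.diagonal (fun i => (d i)⁻¹) * (Emat q)ᵀ)) a b
        = (cnt q (b : G) : ℝ) *
          (2 * (cnt q (-(a : G) - (b : G)) : ℝ) * ((mOf (cnt q) (b : G) : ℝ) + t)⁻¹) := by
      rw [Matrix.mul_apply]
      have : ∀ i : Fin n, Cmat q a i * (Matrix.diagonal (fun i => (d i)⁻¹) * (Emat q)ᵀ) i b
          = if q i = (b : G) then Cmat q a i * (d i)⁻¹ else 0 := by
        intro i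
        rw [Matrix.mul_apply]
        rw [Finset.sum_eq_single_of_mem i (Finset.mem_univ i)
          (fun k _ hk => by rw [Matrix.diagonal_apply_ne' _ hk, zero_mul])]
        rw [Matrix.diagonal_apply_eq, Matrix.transpose_apply, Emat]
        by_cases hqi : q i = (b : G) <;> simp [hqi]
      rw [Finset.sum_congr rfl fun i _ => this i, Finset.sum_ite, Finset.sum_const_zero,
        add_zero]
      have : ∀ i ∈ Finset.univ.filter (fun i => q i = (b : G)),
          Cmat q a i * (d i)⁻¹
            = 2 * (cnt q (-(a : G) - (b : G)) : ℝ) * ((mOf (cnt q) (b : G) : ℝ) + t)⁻¹ := by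
        intro i hi
        rw [Finset.mem_filter] at hi
        simp only [Cmat, hd_def, hi.2]
      rw [Finset.sum_congr rfl this, Finset.sum_const, ← cnt, nsmul_eq_mul]
    rw [Matrix.add_apply, hentry, Matrix.mul_diagonal, Rmat, Matrix.one_apply]
    by_cases hab : a = b <;> simp only [hab, if_true, if_false] <;>
      field_simp <;> ring
  have hprod : ∏ i : Fin n, d i
      = ∏ a : {a : G // 0 < cnt q a}, ((mOf (cnt q) (a : G) : ℝ) + t) ^ (cnt q (a : G)) := by
    exact prod_fiber q (fun a => (mOf (cnt q) a : ℝ) + t) (fun a ha => by rw [ha, pow_zero])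
  rw [hsplit, Matrix.det_mul, Matrix.det_diagonal, Matrix.det_one_add_mul_comm, hW,
    Matrix.det_mul, Matrix.det_diagonal, hprod]
  rw [mul_comm ((Rmat q t).det), ← mul_assoc, ← Finset.prod_mul_distrib,
    mul_comm _ ((Rmat q t).det)]
  congr 1
  refine Finset.prod_congr rfl fun b _ => ?_
  rw [show cnt q (b : G) = (cnt q (b : G) - 1) + 1 from (Nat.succ_pred_eq_of_pos b.2).symm]
  rw [pow_succ, mul_assoc, mul_inv_cancel₀ (hdi (b : G)), mul_one, Nat.add_sub_cancel]

lemma Dmat_eq (t : ℝ) : Dmat q t = Dmat q 0 + t • (1 : Matrix (Fin n) (Fin n) ℝ) := by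
  ext i j
  simp only [Dmat, Matrix.add_apply, Matrix.smul_apply, Matrix.diagonal_apply,
    Matrix.one_apply, smul_eq_mul]
  split_ifs <;> ring

lemma Rmat_eq (t : ℝ) : Rmat q t = Rmat q 0 +
    t • (1 : Matrix {a : G // 0 < cnt q a} {a : G // 0 < cnt q a} ℝ) := by
  ext a b
  simp only [Rmat, Matrix.add_apply, Matrix.smul_apply, Matrix.one_apply, smul_eq_mul]
  split_ifs <;> ring

lemma det_at_zero : (Dmat q 0 + (Emat q)ᵀ * Cmat q).det
    = (Rmat q 0).det *
      ∏ a : {a : G // 0 < cnt q a}, (mOf (cnt q) (a : G) : ℝ) ^ (cnt q (a : G) - 1) := by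
  classical
  set f : ℝ → ℝ := fun t => (Dmat q 0 + (Emat q)ᵀ * Cmat q
    + t • (1 : Matrix (Fin n) (Fin n) ℝ)).det with hf_def
  set g : ℝ → ℝ := fun t => (Rmat q 0 +
      t • (1 : Matrix {a : G // 0 < cnt q a} {a : G // 0 < cnt q a} ℝ)).det *
    ∏ a : {a : G // 0 < cnt q a}, ((mOf (cnt q) (a : G) : ℝ) + t) ^ (cnt q (a : G) - 1)
    with hg_def
  have hf : Continuous f :=
    (continuous_const.add (continuous_id.smul continuous_const)).matrix_det
  have hg : Continuous g := by
    refine Continuous.mul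
      ((continuous_const.add (continuous_id.smul continuous_const)).matrix_det) ?_
    exact continuous_finset_prod _ fun a _ =>
      (continuous_const.add continuous_id).pow _
  have heq : ∀ t ∈ Set.Ioi (0:ℝ), f t = g t := by
    intro t ht
    have h1 : Dmat q 0 + (Emat q)ᵀ * Cmat q + t • (1 : Matrix (Fin n) (Fin n) ℝ)
        = Dmat q t + (Emat q)ᵀ * Cmat q := by
      rw [Dmat_eq q t]; abel
    simp only [hf_def, hg_def, h1, ← Rmat_eq]
    exact waDet q ht
  have h0 : Filter.Tendsto f (nhdsWithin 0 (Set.Ioi 0)) (nhds (f 0)) :=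
    (hf.tendsto 0).mono_left nhdsWithin_le_nhds
  have h2 : Filter.Tendsto g (nhdsWithin 0 (Set.Ioi 0)) (nhds (g 0)) :=
    (hg.tendsto 0).mono_left nhdsWithin_le_nhds
  have h3 : f =ᶠ[nhdsWithin (0:ℝ) (Set.Ioi 0)] g :=
    Filter.eventuallyEq_of_mem self_mem_nhdsWithin heq
  have h4 : f 0 = g 0 := tendsto_nhds_unique (Filter.Tendsto.congr' h3 h0) h2
  have h5 : f 0 = (Dmat q 0 + (Emat q)ᵀ * Cmat q).det := by
    simp [hf_def]
  have h6 : g 0 = (Rmat q 0).det *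
      ∏ a : {a : G // 0 < cnt q a}, (mOf (cnt q) (a : G) : ℝ) ^ (cnt q (a : G) - 1) := by
    simp [hg_def]
  rw [← h5, h4, h6]

lemma detR0 : (Rmat q 0).det = (Mmat (cnt q)).det := by
  classical
  set S : Matrix {a : G // 0 < cnt q a} {a : G // 0 < cnt q a} ℝ :=
    Matrix.diagonal (fun a => Real.sqrt (cnt q (a : G))) with hS_def
  have hcomm : Mmat (cnt q) * S = S * Rmat q 0 := by
    ext a b
    rw [hS_def, Matrix.mul_diagonal, Matrix.diagonal_mul]
    by_cases hab : a = b
    · subst hab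
      simp only [Mmat, Rmat, if_pos rfl, if_true]
      rw [show -(2 • (a : G)) = -(a : G) - (a : G) by rw [two_nsmul]; abel]
      ring
    · have hab' : (a : G) ≠ (b : G) := fun hc => hab (Subtype.ext hc)
      simp only [Mmat, Rmat, if_neg hab, if_neg hab']
      rw [Real.sqrt_mul (cnt_nonneg_real q (a : G))]
      have hb : Real.sqrt (cnt q (b : G)) * Real.sqrt (cnt q (b : G)) = (cnt q (b : G) : ℝ) :=
        Real.mul_self_sqrt (cnt_nonneg_real q (b : G))
      linear_combination (2 * Real.sqrt (cnt q (a : G)) * (cnt q (-(a : G) - (b : G)) : ℝ)) * hb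
  have hdS : S.det ≠ 0 := by
    rw [hS_def, Matrix.det_diagonal]
    exact Finset.prod_ne_zero_iff.mpr fun a _ =>
      ne_of_gt (Real.sqrt_pos.mpr (by exact_mod_cast a.2))
  have hdet := congrArg Matrix.det hcomm
  rw [Matrix.det_mul, Matrix.det_mul, mul_comm ((Mmat (cnt q)).det)] at hdet
  exact (mul_left_cancel₀ hdS hdet).symm

end Aux

end CLPaper

open CLPaper

/-- `det(B_{n,q}ᵀ B_{n,q}) = 3^n det(M_q) ∏_{a ∈ G₊} m_a^{n_a - 1}`; consequently
`ℙ(A_n q = 0) = det(B_{n,q}ᵀ B_{n,q})/(3^{n+1} n^{2n}) = (1/3) n^{-2n} det(M_q) ∏_{a∈G₊} m_a^{n_a-1}`. -/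
theorem det_gram_eq (G : Type*) [AddCommGroup G] [Fintype G]
    (n : ℕ) (hn : 0 < n) (q : Fin n → G) :
    (((gram n q).det : ℝ)
        = 3 ^ n * (Mmat (cnt q)).det *
          ∏ a : {a : G // 0 < cnt q a}, (mOf (cnt q) (a : G) : ℝ) ^ (cnt q (a : G) - 1)) ∧
    (((gram n q).det : ℝ) / ((3 : ℝ) ^ (n + 1) * (n : ℝ) ^ (2 * n))
        = (1 / 3) * ((n : ℝ) ^ (2 * n))⁻¹ * (Mmat (cnt q)).det *
          ∏ a : {a : G // 0 < cnt q a}, (mOf (cnt q) (a : G) : ℝ) ^ (cnt q (a : G) - 1)) := by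
  have hmain : ((gram n q).det : ℝ)
      = 3 ^ n * (Mmat (cnt q)).det *
        ∏ a : {a : G // 0 < cnt q a}, (mOf (cnt q) (a : G) : ℝ) ^ (cnt q (a : G) - 1) := by
    have h0 : ((gram n q).det : ℝ) = ((gram n q).map (fun z : ℤ => (z : ℝ))).det := by
      rw [show ((gram n q).det : ℝ) = (Int.castRingHom ℝ) (gram n q).det from rfl,
        RingHom.map_det]
      rfl
    rw [h0, mapA, Matrix.det_smul, det_at_zero, detR0]
    simp only [Fintype.card_fin]
    ring
  refine ⟨hmain, ?_⟩
  rw [hmain]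
  have hnn : ((n : ℝ)) ^ (2 * n) ≠ 0 := pow_ne_zero _ (Nat.cast_ne_zero.mpr hn.ne')
  have hden : (3 : ℝ) ^ (n + 1) * (n : ℝ) ^ (2 * n) ≠ 0 :=
    mul_ne_zero (pow_ne_zero _ (by norm_num)) hnn
  rw [div_eq_iff hden]
  field_simp
  ring
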